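/- Let X, Y be independent exponential(1) random variables, g1 = (ρ^r-1)/ρ, g2 = (ρ^{2r}-1)/ρ. Then P(X + Y < g2 | X < g1) = (1 - e^{-g1} - g1 e^{-g2})/(1 - e^{-g1}), and for 0 < r < 1/2 this conditional probability is exponentially equal to ρ^{2r-1} as ρ→∞, i.e., lim_{ρ→∞} log P(X+Y<g2 | X<g1)/log ρ = 2r - 1. -/

import Mathlib

open MeasureTheory ProbabilityTheory Filter Real Set

lemma map_eq_exp {Ω : Type*} [MeasurableSpace Ω] (μ : Measure Ω) [IsProbabilityMeasure μ]
    (X : Ω → ℝ) (hX : Measurable X)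
    (htX : ∀ x : ℝ, 0 ≤ x → μ {ω | x < X ω} = ENNReal.ofReal (Real.exp (-x))) :
    μ.map X = expMeasure 1 := by
  haveI : IsProbabilityMeasure (μ.map X) := Measure.isProbabilityMeasure_map hX.aemeasurable
  refine Measure.ext_of_Iic (μ.map X) (expMeasure 1) (fun a => ?_)
  rw [Measure.map_apply hX measurableSet_Iic]
  have hexp : expMeasure 1 (Iic a) = ∫⁻ y in Iic a, exponentialPDF 1 y := by
    rw [expMeasure, gammaMeasure, withDensity_apply _ measurableSet_Iic]
    rfl
  rw [hexp, lintegral_exponentialPDF_eq_antiDeriv one_pos]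
  by_cases h : 0 ≤ a
  · have hc : X ⁻¹' Iic a = {ω | a < X ω}ᶜ := by
      ext ω; simp [not_lt]
    have hm : MeasurableSet {ω | a < X ω} := measurableSet_lt measurable_const hX
    rw [hc, prob_compl_eq_one_sub hm, htX a h, if_pos h]
    rw [← ENNReal.ofReal_one, ← ENNReal.ofReal_sub _ (Real.exp_nonneg _)]
    simp
  · rw [if_neg h, ENNReal.ofReal_zero]
    have h0 : μ {ω | (0:ℝ) < X ω} = 1 := by simpa using htX 0 le_rfl
    have hsub : X ⁻¹' Iic a ⊆ {ω | (0:ℝ) < X ω}ᶜ := by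
      intro ω hω
      simp only [mem_preimage, mem_Iic] at hω
      simp only [mem_compl_iff, mem_setOf_eq, not_lt]
      linarith
    refine le_antisymm (le_trans (measure_mono hsub) ?_) (zero_le)
    have hm : MeasurableSet {ω | (0:ℝ) < X ω} := measurableSet_lt measurable_const hX
    rw [prob_compl_eq_one_sub hm, h0]
    simp

lemma expMeasure_singleton (t : ℝ) : expMeasure 1 {t} = 0 := by
  rw [expMeasure, gammaMeasure, withDensity_apply _ (measurableSet_singleton t),
    Measure.restrict_eq_zero.mpr (by simp), lintegral_zero_measure]

lemma expMeasure_Iio (t : ℝ) :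
    expMeasure 1 (Iio t) = ENNReal.ofReal (if 0 ≤ t then 1 - Real.exp (-t) else 0) := by
  have hic : expMeasure 1 (Iic t) = ENNReal.ofReal (if 0 ≤ t then 1 - Real.exp (-t) else 0) := by
    have : expMeasure 1 (Iic t) = ∫⁻ y in Iic t, exponentialPDF 1 y := by
      rw [expMeasure, gammaMeasure, withDensity_apply _ measurableSet_Iic]; rfl
    rw [this, lintegral_exponentialPDF_eq_antiDeriv one_pos]
    norm_num
  have h1 : expMeasure 1 (Iic t) ≤ expMeasure 1 (Iio t) + expMeasure 1 {t} := by
    rw [← Iio_union_right]; exact measure_union_le _ _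
  rw [expMeasure_singleton, add_zero] at h1
  exact le_antisymm (hic ▸ measure_mono Iio_subset_Iic_self) (hic ▸ h1)

lemma prodMeasure_eval {a b : ℝ} (ha : 0 < a) (hab : a ≤ b) :
    (expMeasure 1).prod (expMeasure 1) {p : ℝ × ℝ | p.1 + p.2 < b ∧ p.1 < a}
      = ENNReal.ofReal (1 - Real.exp (-a) - a * Real.exp (-b)) := by
  have hb : 0 < b := lt_of_lt_of_le ha hab
  have hSm : MeasurableSet {p : ℝ × ℝ | p.1 + p.2 < b ∧ p.1 < a} := by
    apply MeasurableSet.inter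
    · exact measurableSet_lt (measurable_fst.add measurable_snd) measurable_const
    · exact measurableSet_lt measurable_fst measurable_const
  haveI : IsProbabilityMeasure (expMeasure 1) := isProbabilityMeasure_expMeasure one_pos
  rw [Measure.prod_apply hSm]
  have hpre : ∀ x : ℝ, (Prod.mk x ⁻¹' {p : ℝ × ℝ | p.1 + p.2 < b ∧ p.1 < a})
      = if x < a then Iio (b - x) else ∅ := by
    intro x
    split_ifs with h
    · ext y; simp only [mem_preimage, mem_setOf_eq, mem_Iio]; constructor
      · rintro ⟨h1, _⟩; linarith
      · intro h1; exact ⟨by linarith, h⟩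
    · ext y; simp only [mem_preimage, mem_setOf_eq, mem_Iio]; tauto
  have hker : ∀ x : ℝ, expMeasure 1 (Prod.mk x ⁻¹' {p : ℝ × ℝ | p.1 + p.2 < b ∧ p.1 < a})
      = Set.indicator (Iio a) (fun x => ENNReal.ofReal (1 - Real.exp (-(b - x)))) x := by
    intro x
    rw [hpre x]
    split_ifs with h
    · rw [expMeasure_Iio, Set.indicator_of_mem (mem_Iio.mpr h), if_pos (by linarith)]
    · rw [measure_empty, Set.indicator_of_notMem (by simpa using h)]
  rw [lintegral_congr hker]
  have hcont : Continuous (fun x : ℝ => 1 - Real.exp (-(b - x))) := by continuity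
  have hfm : Measurable fun x : ℝ =>
      Set.indicator (Iio a) (fun x => ENNReal.ofReal (1 - Real.exp (-(b - x)))) x :=
    (hcont.measurable.ennreal_ofReal).indicator measurableSet_Iio
  have hpdfm : Measurable (gammaPDF 1 1) := (measurable_gammaPDFReal 1 1).ennreal_ofReal
  rw [show expMeasure 1 = volume.withDensity (gammaPDF 1 1) from rfl,
    lintegral_withDensity_eq_lintegral_mul _ hpdfm hfm]
  have hpt : ∀ x : ℝ, (gammaPDF 1 1 * fun x =>
        Set.indicator (Iio a) (fun x => ENNReal.ofReal (1 - Real.exp (-(b - x)))) x) x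
      = Set.indicator (Ico 0 a)
          (fun x => ENNReal.ofReal ((1 - Real.exp (-(b - x))) * Real.exp (-x))) x := by
    intro x
    simp only [Pi.mul_apply]
    by_cases h0 : 0 ≤ x
    · by_cases h1 : x < a
      · rw [Set.indicator_of_mem (mem_Iio.mpr h1), Set.indicator_of_mem (mem_Ico.mpr ⟨h0, h1⟩),
          show gammaPDF 1 1 x = exponentialPDF 1 x from rfl, exponentialPDF_of_nonneg h0,
          ← ENNReal.ofReal_mul (by positivity)]
        congr 1
        rw [one_mul, one_mul, mul_comm]
      · rw [Set.indicator_of_notMem (by simpa using h1),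
          Set.indicator_of_notMem (fun hc => h1 hc.2), mul_zero]
    · rw [show gammaPDF 1 1 x = exponentialPDF 1 x from rfl,
        exponentialPDF_of_neg (lt_of_not_ge h0), zero_mul,
        Set.indicator_of_notMem (fun hc => h0 hc.1)]
  rw [lintegral_congr hpt, lintegral_indicator measurableSet_Ico]
  have hcont2 : Continuous fun x : ℝ => (1 - Real.exp (-(b - x))) * Real.exp (-x) := by
    continuity
  have hint : IntegrableOn (fun x => (1 - Real.exp (-(b - x))) * Real.exp (-x)) (Ico 0 a) :=
    (hcont2.integrableOn_Icc (a := 0) (b := a)).mono_set Ico_subset_Icc_self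
  have hnn : 0 ≤ᵐ[volume.restrict (Ico 0 a)]
      fun x => (1 - Real.exp (-(b - x))) * Real.exp (-x) := by
    filter_upwards [ae_restrict_mem measurableSet_Ico] with x hx
    simp only [Pi.zero_apply]
    have h1 : Real.exp (-(b - x)) ≤ 1 := by
      rw [Real.exp_le_one_iff]
      have := hx.2
      linarith
    exact mul_nonneg (by linarith) (Real.exp_pos (-x)).le
  rw [← ofReal_integral_eq_lintegral_ofReal hint hnn]
  congr 1
  have hfe : (fun x : ℝ => (1 - Real.exp (-(b - x))) * Real.exp (-x))
      = fun x => Real.exp (-x) - Real.exp (-b) := by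
    funext x
    rw [sub_mul, one_mul, ← Real.exp_add]
    ring_nf
  rw [hfe, MeasureTheory.integral_Ico_eq_integral_Ioo,
    ← MeasureTheory.integral_Ioc_eq_integral_Ioo,
    ← intervalIntegral.integral_of_le ha.le,
    intervalIntegral.integral_sub (by apply Continuous.intervalIntegrable; continuity)
      intervalIntegrable_const,
    intervalIntegral.integral_const, intervalIntegral.integral_comp_neg Real.exp, integral_exp]
  simp only [smul_eq_mul, sub_zero, neg_zero, Real.exp_zero, neg_neg]

lemma joint_val {Ω : Type*} [MeasurableSpace Ω] (μ : Measure Ω) [IsProbabilityMeasure μ]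
    (X Y : Ω → ℝ) (hX : Measurable X) (hY : Measurable Y)
    (hXY : IndepFun X Y μ)
    (htX : ∀ x : ℝ, 0 ≤ x → μ {ω | x < X ω} = ENNReal.ofReal (Real.exp (-x)))
    (htY : ∀ x : ℝ, 0 ≤ x → μ {ω | x < Y ω} = ENNReal.ofReal (Real.exp (-x)))
    {a b : ℝ} (ha : 0 < a) (hab : a ≤ b) :
    μ {ω | X ω < a} = ENNReal.ofReal (1 - Real.exp (-a)) ∧
    μ ({ω | X ω + Y ω < b} ∩ {ω | X ω < a})
      = ENNReal.ofReal (1 - Real.exp (-a) - a * Real.exp (-b)) := by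
  have hmapX := map_eq_exp μ X hX htX
  have hmapY := map_eq_exp μ Y hY htY
  constructor
  · have : {ω | X ω < a} = X ⁻¹' Iio a := rfl
    rw [this, ← Measure.map_apply hX measurableSet_Iio, hmapX, expMeasure_Iio, if_pos ha.le]
  · have hSm : MeasurableSet {p : ℝ × ℝ | p.1 + p.2 < b ∧ p.1 < a} := by
      apply MeasurableSet.inter
      · exact measurableSet_lt (measurable_fst.add measurable_snd) measurable_const
      · exact measurableSet_lt measurable_fst measurable_const
    have hpre : {ω | X ω + Y ω < b} ∩ {ω | X ω < a}
        = (fun ω => (X ω, Y ω)) ⁻¹' {p : ℝ × ℝ | p.1 + p.2 < b ∧ p.1 < a} := rfl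
    rw [hpre, ← Measure.map_apply (hX.prodMk hY) hSm,
      (indepFun_iff_map_prod_eq_prod_map_map hX.aemeasurable hY.aemeasurable).mp hXY,
      hmapX, hmapY, prodMeasure_eval ha hab]

lemma exp_neg_quad {u : ℝ} (hu : 0 ≤ u) : Real.exp (-u) ≤ 1 - u + u ^ 2 := by
  have h1 : (1 : ℝ) + u ≤ Real.exp u := by linarith [Real.add_one_le_exp u]
  have h2 : (0:ℝ) < 1 + u := by linarith
  rw [Real.exp_neg]
  have h4 : (Real.exp u)⁻¹ ≤ (1 + u)⁻¹ := by
    apply inv_anti₀ h2 h1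
  refine h4.trans ?_
  have key : (1 + u)⁻¹ * (1 + u) = 1 := inv_mul_cancel₀ h2.ne'
  nlinarith [pow_nonneg hu 3, inv_nonneg.mpr h2.le]

lemma lim_one_sub_exp : Tendsto (fun t : ℝ => (1 - Real.exp (-t)) / t)
    (nhdsWithin 0 {0}ᶜ) (nhds 1) := by
  have h1 : HasDerivAt (fun t : ℝ => -t) (-1) 0 := (hasDerivAt_id 0).neg
  have h2 : HasDerivAt (fun t : ℝ => Real.exp (-t)) (Real.exp (-0) * -1) 0 :=
    (Real.hasDerivAt_exp (-0)).comp 0 h1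
  have h3 : HasDerivAt (fun t : ℝ => 1 - Real.exp (-t)) 1 0 := by
    have := (hasDerivAt_const 0 (1:ℝ)).sub h2
    simpa [Pi.sub_def] using this
  have h4 := hasDerivAt_iff_tendsto_slope.mp h3
  refine h4.congr' ?_
  filter_upwards [self_mem_nhdsWithin] with t ht
  rw [slope_def_field]
  simp [div_eq_div_iff]

lemma analysis_part (r : ℝ) (hr0 : 0 < r) (hr : r < 1/2) (g1 g2 P : ℝ → ℝ)
    (hg1 : ∀ ρ : ℝ, g1 ρ = (ρ ^ r - 1) / ρ)
    (hg2 : ∀ ρ : ℝ, g2 ρ = (ρ ^ (2*r) - 1) / ρ)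
    (hPf : ∀ ρ : ℝ, 1 < ρ →
      P ρ = (1 - Real.exp (-(g1 ρ)) - g1 ρ * Real.exp (-(g2 ρ)))
              / (1 - Real.exp (-(g1 ρ)))) :
    Tendsto (fun ρ : ℝ => Real.log (P ρ) / Real.log ρ) atTop (nhds (2*r - 1)) := by
  -- basic facts
  have hgt : ∀ ρ : ℝ, 1 < ρ → 0 < g1 ρ ∧ g1 ρ < g2 ρ := by
    intro ρ hρ
    have hρ0 : (0:ℝ) < ρ := by linarith
    have h1 : 1 < ρ ^ r := by
      rw [Real.one_lt_rpow_iff_of_pos hρ0]; exact Or.inl ⟨hρ, hr0⟩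
    have h2 : ρ ^ r < ρ ^ (2*r) := by
      rw [Real.rpow_lt_rpow_left_iff hρ]; linarith
    constructor
    · rw [hg1]; exact div_pos (by linarith) hρ0
    · rw [hg1, hg2]
      apply div_lt_div_of_pos_right (by linarith) hρ0
  have hlim : ∀ s : ℝ, s < 1 → Tendsto (fun ρ : ℝ => (ρ ^ s - 1) / ρ) atTop (nhds 0) := by
    intro s hs
    have h1 : Tendsto (fun ρ : ℝ => ρ ^ (s - 1) - ρ⁻¹) atTop (nhds 0) := by
      have h2 : Tendsto (fun ρ : ℝ => ρ ^ (-(1 - s))) atTop (nhds 0) :=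
        tendsto_rpow_neg_atTop (by linarith)
      have h3 : Tendsto (fun ρ : ℝ => ρ ^ (s - 1)) atTop (nhds 0) := by
        convert h2 using 2; ring
      simpa using h3.sub tendsto_inv_atTop_zero
    refine h1.congr' ?_
    filter_upwards [eventually_gt_atTop 0] with ρ hρ
    rw [sub_div, Real.rpow_sub hρ, Real.rpow_one, one_div]
  have hu0 : Tendsto g1 atTop (nhds 0) := by
    refine (hlim r (by linarith)).congr' ?_
    filter_upwards with ρ; rw [hg1]
  have hv0 : Tendsto g2 atTop (nhds 0) := by
    refine (hlim (2*r) (by linarith)).congr' ?_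
    filter_upwards with ρ; rw [hg2]
  have huv : Tendsto (fun ρ => g1 ρ / g2 ρ) atTop (nhds 0) := by
    have h1 : Tendsto (fun ρ : ℝ => (ρ ^ r + 1)⁻¹) atTop (nhds 0) := by
      apply Tendsto.inv_tendsto_atTop
      exact tendsto_atTop_add_const_right _ 1 (tendsto_rpow_atTop hr0)
    refine h1.congr' ?_
    filter_upwards [eventually_gt_atTop 1] with ρ hρ
    have hρ0 : (0:ℝ) < ρ := by linarith
    have hx : 1 < ρ ^ r := by
      rw [Real.one_lt_rpow_iff_of_pos hρ0]; exact Or.inl ⟨hρ, hr0⟩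
    have hsq : ρ ^ (2*r) = (ρ ^ r) ^ 2 := by
      rw [← Real.rpow_natCast (ρ ^ r) 2, ← Real.rpow_mul hρ0.le]
      norm_num [mul_comm]
    rw [hg1, hg2, hsq]
    have hx1 : ρ ^ r - 1 ≠ 0 := by nlinarith
    have hx2 : (ρ ^ r) ^ 2 - 1 ≠ 0 := by nlinarith
    have hx3 : ρ ^ r + 1 ≠ 0 := by nlinarith
    field_simp
    ring
  -- standard limit composed with g1, g2
  have hcomp : ∀ g : ℝ → ℝ, Tendsto g atTop (nhds 0) → (∀ᶠ ρ in atTop, 0 < g ρ) →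
      Tendsto (fun ρ => (1 - Real.exp (-(g ρ))) / g ρ) atTop (nhds 1) := by
    intro g hg hgpos
    apply lim_one_sub_exp.comp
    rw [tendsto_nhdsWithin_iff]
    refine ⟨hg, ?_⟩
    filter_upwards [hgpos] with ρ h
    simp only [Set.mem_compl_iff, Set.mem_singleton_iff]
    exact h.ne'
  have hApos : ∀ᶠ ρ in atTop, 0 < g1 ρ := by
    filter_upwards [eventually_gt_atTop 1] with ρ hρ; exact (hgt ρ hρ).1
  have hBpos : ∀ᶠ ρ in atTop, 0 < g2 ρ := by
    filter_upwards [eventually_gt_atTop 1] with ρ hρ; exact (hgt ρ hρ).1.trans (hgt ρ hρ).2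
  have hA : Tendsto (fun ρ => (1 - Real.exp (-(g1 ρ))) / g1 ρ) atTop (nhds 1) :=
    hcomp g1 hu0 hApos
  have hB : Tendsto (fun ρ => (1 - Real.exp (-(g2 ρ))) / g2 ρ) atTop (nhds 1) :=
    hcomp g2 hv0 hBpos
  -- the correction term
  have hC : Tendsto (fun ρ => (1 - Real.exp (-(g1 ρ)) - g1 ρ) / (g1 ρ * g2 ρ)) atTop
      (nhds 0) := by
    have hlow : Tendsto (fun ρ => -(g1 ρ / g2 ρ)) atTop (nhds 0) := by
      simpa using huv.neg
    refine tendsto_of_tendsto_of_tendsto_of_le_of_le' hlow tendsto_const_nhds ?_ ?_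
    · filter_upwards [eventually_gt_atTop 1] with ρ hρ
      obtain ⟨hu, huv'⟩ := hgt ρ hρ
      have hv : 0 < g2 ρ := hu.trans huv'
      have hquad := exp_neg_quad hu.le
      have hnum : -(g1 ρ)^2 ≤ 1 - Real.exp (-(g1 ρ)) - g1 ρ := by nlinarith
      calc -(g1 ρ / g2 ρ) = -(g1 ρ)^2 / (g1 ρ * g2 ρ) := by
              field_simp
        _ ≤ (1 - Real.exp (-(g1 ρ)) - g1 ρ) / (g1 ρ * g2 ρ) :=
              (div_le_div_iff_of_pos_right (mul_pos hu hv)).mpr hnum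
    · filter_upwards [eventually_gt_atTop 1] with ρ hρ
      obtain ⟨hu, huv'⟩ := hgt ρ hρ
      have hv : 0 < g2 ρ := hu.trans huv'
      apply div_nonpos_of_nonpos_of_nonneg
      · linarith [Real.add_one_le_exp (-(g1 ρ))]
      · exact (mul_pos hu hv).le
  -- P / g2 tends to 1
  have hPV : Tendsto (fun ρ => P ρ / g2 ρ) atTop (nhds 1) := by
    have hlim2 : Tendsto (fun ρ =>
        ((1 - Real.exp (-(g1 ρ)) - g1 ρ) / (g1 ρ * g2 ρ)
          + (1 - Real.exp (-(g2 ρ))) / g2 ρ)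
          * ((1 - Real.exp (-(g1 ρ))) / g1 ρ)⁻¹) atTop (nhds 1) := by
      have := (hC.add hB).mul (hA.inv₀ one_ne_zero)
      simpa using this
    refine hlim2.congr' ?_
    filter_upwards [eventually_gt_atTop 1] with ρ hρ
    obtain ⟨hu, huv'⟩ := hgt ρ hρ
    have hv : 0 < g2 ρ := hu.trans huv'
    have hD : 0 < 1 - Real.exp (-(g1 ρ)) := by
      have : Real.exp (-(g1 ρ)) < 1 := Real.exp_lt_one_iff.mpr (by linarith)
      linarith
    rw [hPf ρ hρ]
    field_simp
    ring
  -- eventual rewriting of log P / log ρ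
  have hev : ∀ᶠ ρ in atTop,
      Real.log (P ρ) / Real.log ρ
        = Real.log (P ρ / g2 ρ) / Real.log ρ
            + (2*r + Real.log (1 - ρ ^ (-(2*r))) / Real.log ρ - 1) := by
    filter_upwards [eventually_gt_atTop 1,
      hPV.eventually (lt_mem_nhds (show (1:ℝ)/2 < 1 by norm_num))] with ρ hρ hPhalf
    have hρ0 : (0:ℝ) < ρ := by linarith
    obtain ⟨hu, huv'⟩ := hgt ρ hρ
    have hv : 0 < g2 ρ := hu.trans huv'
    have hPq : 0 < P ρ / g2 ρ := by linarith
    have hlρ : 0 < Real.log ρ := Real.log_pos hρ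
    have h2r : 1 < ρ ^ (2*r) := by
      rw [Real.one_lt_rpow_iff_of_pos hρ0]; exact Or.inl ⟨hρ, by linarith⟩
    have hinv : ρ ^ (-(2*r)) < 1 := by
      rw [Real.rpow_neg hρ0.le]
      exact inv_lt_one_of_one_lt₀ h2r
    have hinvpos : 0 < ρ ^ (-(2*r)) := Real.rpow_pos_of_pos hρ0 _
    have hlogP : Real.log (P ρ) = Real.log (P ρ / g2 ρ) + Real.log (g2 ρ) := by
      conv_lhs => rw [← div_mul_cancel₀ (P ρ) hv.ne']
      rw [Real.log_mul hPq.ne' hv.ne']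
    have hfact : ρ ^ (2*r) - 1 = ρ ^ (2*r) * (1 - ρ ^ (-(2*r))) := by
      rw [mul_sub, mul_one, ← Real.rpow_add hρ0]
      simp
    have hlogv : Real.log (g2 ρ)
        = 2*r * Real.log ρ + Real.log (1 - ρ ^ (-(2*r))) - Real.log ρ := by
      rw [hg2, Real.log_div (by linarith : ρ ^ (2*r) - 1 ≠ 0) hρ0.ne', hfact,
        Real.log_mul (by positivity) (by linarith), Real.log_rpow hρ0]
    rw [hlogP, hlogv]
    field_simp
  -- final combination
  have hfin : Tendsto (fun ρ =>
      Real.log (P ρ / g2 ρ) / Real.log ρ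
        + (2*r + Real.log (1 - ρ ^ (-(2*r))) / Real.log ρ - 1)) atTop
      (nhds (0 + (2*r + 0 - 1))) := by
    have t1 : Tendsto (fun ρ => Real.log (P ρ / g2 ρ)) atTop (nhds 0) := by
      have := (Real.continuousAt_log one_ne_zero).tendsto.comp hPV
      simpa [Function.comp_def] using this
    have t1' := t1.div_atTop Real.tendsto_log_atTop
    have t2 : Tendsto (fun ρ : ℝ => Real.log (1 - ρ ^ (-(2*r)))) atTop (nhds 0) := by
      have h0 : Tendsto (fun ρ : ℝ => 1 - ρ ^ (-(2*r))) atTop (nhds 1) := by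
        have := tendsto_rpow_neg_atTop (show (0:ℝ) < 2*r by linarith)
        simpa using (tendsto_const_nhds (x := (1:ℝ))).sub this
      have := (Real.continuousAt_log one_ne_zero).tendsto.comp h0
      simpa [Function.comp_def] using this
    have t2' := t2.div_atTop Real.tendsto_log_atTop
    exact t1'.add ((tendsto_const_nhds.add t2').sub tendsto_const_nhds)
  have : (0 : ℝ) + (2*r + 0 - 1) = 2*r - 1 := by ring
  rw [this] at hfin
  exact hfin.congr' (by filter_upwards [hev] with ρ h; exact h.symm)


/-- For independent exponential(1) variables `X, Y`, with `g1 = (ρ^r-1)/ρ` and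
`g2 = (ρ^{2r}-1)/ρ`:
`P(X+Y < g2 | X < g1) = (1 - e^{-g1} - g1 e^{-g2})/(1 - e^{-g1})`, and for
`0 < r < 1/2` this conditional probability is exponentially equal to `ρ^{2r-1}`,
i.e. `log P / log ρ → 2r - 1`. -/
theorem stmt6 {Ω : Type*} [MeasurableSpace Ω] (μ : Measure Ω) [IsProbabilityMeasure μ]
    (X Y : Ω → ℝ) (hX : Measurable X) (hY : Measurable Y)
    (hXY : IndepFun X Y μ)
    (htX : ∀ x : ℝ, 0 ≤ x → μ {ω | x < X ω} = ENNReal.ofReal (Real.exp (-x)))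
    (htY : ∀ x : ℝ, 0 ≤ x → μ {ω | x < Y ω} = ENNReal.ofReal (Real.exp (-x)))
    (r : ℝ) (hr0 : 0 < r) (hr : r < 1/2)
    (g1 g2 : ℝ → ℝ)
    (hg1 : ∀ ρ : ℝ, g1 ρ = (ρ ^ r - 1) / ρ)
    (hg2 : ∀ ρ : ℝ, g2 ρ = (ρ ^ (2*r) - 1) / ρ)
    (P : ℝ → ℝ)
    (hP : ∀ ρ : ℝ, P ρ =
      (μ ({ω | X ω + Y ω < g2 ρ} ∩ {ω | X ω < g1 ρ})).toReal
        / (μ {ω | X ω < g1 ρ}).toReal) :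
    (∀ ρ : ℝ, 1 < ρ →
      P ρ = (1 - Real.exp (-(g1 ρ)) - g1 ρ * Real.exp (-(g2 ρ)))
              / (1 - Real.exp (-(g1 ρ)))) ∧
    Tendsto (fun ρ : ℝ => Real.log (P ρ) / Real.log ρ) atTop (nhds (2*r - 1)) := by
  have hpart1 : ∀ ρ : ℝ, 1 < ρ →
      P ρ = (1 - Real.exp (-(g1 ρ)) - g1 ρ * Real.exp (-(g2 ρ)))
              / (1 - Real.exp (-(g1 ρ))) := by
    intro ρ hρ
    have hρ0 : (0:ℝ) < ρ := by linarith
    have h1 : 1 < ρ ^ r := by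
      rw [Real.one_lt_rpow_iff_of_pos hρ0]; exact Or.inl ⟨hρ, hr0⟩
    have h2 : ρ ^ r ≤ ρ ^ (2*r) := by
      apply Real.rpow_le_rpow_left_iff hρ |>.mpr; linarith
    have ha : 0 < g1 ρ := by rw [hg1]; exact div_pos (by linarith) hρ0
    have hab : g1 ρ ≤ g2 ρ := by
      rw [hg1, hg2]
      apply div_le_div_of_nonneg_right (by linarith) hρ0.le
    obtain ⟨hden, hnum⟩ := joint_val μ X Y hX hY hXY htX htY ha hab
    have hNnn : 0 ≤ 1 - Real.exp (-(g1 ρ)) - g1 ρ * Real.exp (-(g2 ρ)) := by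
      set a := g1 ρ; set b := g2 ρ
      have hba : Real.exp (-b) ≤ Real.exp (-a) := Real.exp_le_exp.mpr (by linarith)
      have h2' : Real.exp (-a) * Real.exp a = 1 := by rw [← Real.exp_add]; simp
      have k1 : a * Real.exp (-b) ≤ a * Real.exp (-a) :=
        mul_le_mul_of_nonneg_left hba ha.le
      have k2 := Real.add_one_le_exp a
      nlinarith [Real.exp_pos (-a), Real.exp_pos a]
    have hDnn : 0 ≤ 1 - Real.exp (-(g1 ρ)) := by
      have : Real.exp (-(g1 ρ)) ≤ 1 := Real.exp_le_one_iff.mpr (by linarith)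
      linarith
    rw [hP ρ, hnum, hden, ENNReal.toReal_ofReal hNnn, ENNReal.toReal_ofReal hDnn]
  exact ⟨hpart1, analysis_part r hr0 hr g1 g2 P hg1 hg2 hpart1⟩
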